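/- Let L > 0, T > 0, R > 0. Suppose f : [0,T]×ℝ×ℝ → ℝ is C¹, L-periodic in x, with v ↦ f(t,x,v) supported in [−R,R] for all (t,x), E : [0,T]×ℝ → ℝ is C² and L-periodic in x, f satisfies ∂_t f + v ∂_x f + E(t,x) ∂_v f = 0, and for all t: ∂_x E(t,x) = ρ(t,x) := ∫_ℝ f(t,x,v) dv − 1 and ∫₀^L E(t,x) dx = 0. Set J(t,x) := ∫_ℝ v f(t,x,v) dv and J̄(t) := (1/L)∫₀^L J(t,x) dx. Let (X,V) : [0,T] → ℝ² be C¹ with X'(t) = V(t) and V'(t) = E(t,X(t)). Then for all t ∈ (0,T): d/dt [E(t,X(t))] = −J(t,X(t)) + J̄(t) + V(t) ρ(t,X(t)). -/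

import Mathlib

open MeasureTheory

private lemma supp_Icc {R : ℝ} {g : ℝ → ℝ} (h : ∀ v, R < |v| → g v = 0) :
    ∀ v, v ∉ Set.Icc (-R) R → g v = 0 := by
  intro v hv
  apply h
  simp only [Set.mem_Icc, not_and_or, not_le] at hv
  rcases hv with h1 | h1
  · exact lt_abs.2 (Or.inr (by linarith))
  · exact lt_abs.2 (Or.inl h1)

private lemma integrable_of_supp {R : ℝ} {g : ℝ → ℝ} (hg : Continuous g)
    (h : ∀ v, R < |v| → g v = 0) : Integrable g :=
  hg.integrable_of_hasCompactSupport (HasCompactSupport.intro isCompact_Icc (supp_Icc h))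

private lemma integral_deriv_of_supp {R : ℝ} (hR : 0 < R) {g g' : ℝ → ℝ}
    (hc : Continuous g') (hd : ∀ v, HasDerivAt g (g' v) v)
    (h : ∀ v, R < |v| → g v = 0) (h' : ∀ v, R < |v| → g' v = 0) :
    ∫ v, g' v = 0 := by
  have hsub : Function.support g' ⊆ Set.Ioc (-(R+1)) (R+1) := by
    intro v hv
    simp only [Function.mem_support] at hv
    by_contra hcon
    simp only [Set.mem_Ioc, not_and_or, not_lt, not_le] at hcon
    apply hv
    apply h'
    rcases hcon with h1 | h1
    · exact lt_abs.2 (Or.inr (by linarith))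
    · exact lt_abs.2 (Or.inl (by linarith))
  have h1 : ∫ v, g' v = ∫ v in Set.Ioc (-(R+1)) (R+1), g' v := by
    rw [← integral_indicator measurableSet_Ioc, Set.indicator_eq_self.2 hsub]
  rw [h1, ← intervalIntegral.integral_of_le (by linarith)]
  rw [intervalIntegral.integral_eq_sub_of_hasDerivAt (fun v _ => hd v) (hc.intervalIntegrable _ _)]
  rw [h _ (by rw [abs_of_pos (by linarith)]; linarith),
    h _ (by rw [abs_of_neg (by linarith)]; linarith), sub_zero]


private lemma hasDerivAt_int_param {R : ℝ} (hR : 0 < R)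
    {F F' : ℝ → ℝ → ℝ}
    (hF : Continuous fun p : ℝ × ℝ => F p.1 p.2)
    (hF' : Continuous fun p : ℝ × ℝ => F' p.1 p.2)
    (hs : ∀ s v, R < |v| → F s v = 0)
    (hs' : ∀ s v, R < |v| → F' s v = 0)
    (hd : ∀ s v, HasDerivAt (fun u => F u v) (F' s v) s)
    (t : ℝ) :
    HasDerivAt (fun s => ∫ v, F s v) (∫ v, F' t v) t := by
  obtain ⟨C, hC⟩ := (IsCompact.prod (isCompact_closedBall t 1) isCompact_Icc).exists_bound_of_continuousOn
    (s := Metric.closedBall t 1 ×ˢ Set.Icc (-R) R) hF'.continuousOn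
  refine (hasDerivAt_integral_of_dominated_loc_of_deriv_le (s := Metric.ball t 1) (Metric.ball_mem_nhds t one_pos)
    (bound := Set.indicator (Set.Icc (-R) R) (fun _ => C))
    (Filter.Eventually.of_forall fun s =>
      ((hF.comp (Continuous.prodMk_right s)).aestronglyMeasurable))
    (integrable_of_supp (hF.comp (Continuous.prodMk_right t)) (hs t))
    ((hF'.comp (Continuous.prodMk_right t)).aestronglyMeasurable)
    (Filter.Eventually.of_forall ?_)
    ?_
    (Filter.Eventually.of_forall fun v s _ => hd s v)).2
  · intro v s hsball
    by_cases hv : R < |v|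
    · rw [hs' s v hv, Set.indicator_of_notMem (fun hmem => absurd hv (by
        simp only [Set.mem_Icc] at hmem; rw [not_lt, abs_le]; exact hmem))]
      simp
    · have hvmem : v ∈ Set.Icc (-R) R := by
        rw [not_lt] at hv; exact Set.mem_Icc.2 (abs_le.1 hv)
      rw [Set.indicator_of_mem hvmem]
      exact hC (s, v) ⟨Metric.ball_subset_closedBall hsball, hvmem⟩
  · exact (integrable_indicator_iff measurableSet_Icc).2
      (integrableOn_const measure_Icc_lt_top.ne)

private lemma hasDerivAt_int_param_Ioc {L : ℝ}
    {F F' : ℝ → ℝ → ℝ}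
    (hF : Continuous fun p : ℝ × ℝ => F p.1 p.2)
    (hF' : Continuous fun p : ℝ × ℝ => F' p.1 p.2)
    (hd : ∀ s x, HasDerivAt (fun u => F u x) (F' s x) s)
    (t : ℝ) :
    HasDerivAt (fun s => ∫ x in Set.Ioc (0:ℝ) L, F s x)
      (∫ x in Set.Ioc (0:ℝ) L, F' t x) t := by
  obtain ⟨C, hC⟩ := (IsCompact.prod (isCompact_closedBall t 1) isCompact_Icc).exists_bound_of_continuousOn
    (s := Metric.closedBall t 1 ×ˢ Set.Icc (0:ℝ) L) hF'.continuousOn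
  refine (hasDerivAt_integral_of_dominated_loc_of_deriv_le (s := Metric.ball t 1) (Metric.ball_mem_nhds t one_pos)
    (bound := fun _ => C)
    (Filter.Eventually.of_forall fun s =>
      ((hF.comp (Continuous.prodMk_right s)).aestronglyMeasurable.restrict))
    ((hF.comp (Continuous.prodMk_right t)).integrableOn_Ioc)
    ((hF'.comp (Continuous.prodMk_right t)).aestronglyMeasurable.restrict)
    ?_
    (integrableOn_const measure_Ioc_lt_top.ne)
    (Filter.Eventually.of_forall fun x s _ => hd s x)).2
  · filter_upwards [ae_restrict_mem measurableSet_Ioc] with x hx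
    intro s hsball
    exact hC (s, x) ⟨Metric.ball_subset_closedBall hsball, Set.Ioc_subset_Icc_self hx⟩

/-- First total time derivative of the field along a characteristic for the periodic
Vlasov–Poisson system: if `dX/dt = V`, `dV/dt = E(t,X)`, then
`d/dt [E(t,X(t))] = −J(t,X(t)) + J̄(t) + V(t) ρ(t,X(t))`. -/
theorem field_derivative_along_characteristics
    (L T R : ℝ) (hL : 0 < L) (hT : 0 < T) (hR : 0 < R)
    (f : ℝ → ℝ → ℝ → ℝ) (E : ℝ → ℝ → ℝ)
    (hf : ContDiff ℝ 1 (fun p : ℝ × ℝ × ℝ => f p.1 p.2.1 p.2.2))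
    (hper : ∀ t x v, f t (x + L) v = f t x v)
    (hsupp : ∀ t x v, R < |v| → f t x v = 0)
    (hE : ContDiff ℝ 2 (fun p : ℝ × ℝ => E p.1 p.2))
    (hEper : ∀ t x, E t (x + L) = E t x)
    (hVlasov : ∀ t x v,
      deriv (fun s => f s x v) t + v * deriv (fun y => f t y v) x
        + E t x * deriv (fun w => f t x w) v = 0)
    (hPoisson : ∀ t x, deriv (fun y => E t y) x = (∫ v : ℝ, f t x v) - 1)
    (hmean : ∀ t, (∫ x in (0:ℝ)..L, E t x) = 0)
    (ρ J : ℝ → ℝ → ℝ) (Jbar : ℝ → ℝ)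
    (hρ : ∀ t x, ρ t x = (∫ v : ℝ, f t x v) - 1)
    (hJ : ∀ t x, J t x = ∫ v : ℝ, v * f t x v)
    (hJbar : ∀ t, Jbar t = (1 / L) * ∫ x in (0:ℝ)..L, J t x)
    (X V : ℝ → ℝ)
    (hX : ∀ t, HasDerivAt X (V t) t)
    (hV : ∀ t, HasDerivAt V (E t (X t)) t) :
    ∀ t ∈ Set.Ioo (0 : ℝ) T,
      deriv (fun s => E s (X s)) t = -J t (X t) + Jbar t + V t * ρ t (X t) := by
  intro t₀ _
  set F : ℝ × ℝ × ℝ → ℝ := fun p => f p.1 p.2.1 p.2.2 with hFdef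
  set EF : ℝ × ℝ → ℝ := fun p => E p.1 p.2 with hEFdef
  have hfdiff : Differentiable ℝ F := hf.differentiable one_ne_zero
  have hfc : Continuous (fderiv ℝ F) := hf.continuous_fderiv one_ne_zero
  have hEdiff : Differentiable ℝ EF := hE.differentiable two_ne_zero
  have hE1 : ContDiff ℝ 1 (fderiv ℝ EF) := hE.fderiv_right (by norm_num)
  -- partial derivatives of f
  have hft : ∀ t x v, HasDerivAt (fun s => f s x v)
      (fderiv ℝ F (t, x, v) (1, 0, 0)) t := fun t x v =>
    (hfdiff (t, x, v)).hasFDerivAt.comp_hasDerivAt (l := F) t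
      ((hasDerivAt_id' t).prodMk (hasDerivAt_const t (x, v)))
  have hfx : ∀ t x v, HasDerivAt (fun y => f t y v)
      (fderiv ℝ F (t, x, v) (0, 1, 0)) x := fun t x v =>
    (hfdiff (t, x, v)).hasFDerivAt.comp_hasDerivAt (l := F) x
      ((hasDerivAt_const x t).prodMk ((hasDerivAt_id' x).prodMk (hasDerivAt_const x v)))
  have hfv : ∀ t x v, HasDerivAt (fun w => f t x w)
      (fderiv ℝ F (t, x, v) (0, 0, 1)) v := fun t x v =>
    (hfdiff (t, x, v)).hasFDerivAt.comp_hasDerivAt (l := F) v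
      ((hasDerivAt_const v t).prodMk ((hasDerivAt_const v x).prodMk (hasDerivAt_id' v)))
  -- partial derivatives of E
  have hEt : ∀ t x, HasDerivAt (fun s => E s x)
      (fderiv ℝ EF (t, x) (1, 0)) t := fun t x =>
    (hEdiff (t, x)).hasFDerivAt.comp_hasDerivAt (l := EF) t
      ((hasDerivAt_id' t).prodMk (hasDerivAt_const t x))
  have hEx : ∀ t x, HasDerivAt (fun y => E t y)
      (fderiv ℝ EF (t, x) (0, 1)) x := fun t x =>
    (hEdiff (t, x)).hasFDerivAt.comp_hasDerivAt x
      ((hasDerivAt_const x t).prodMk (hasDerivAt_id x))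
  -- continuity of partials of f
  have hftc : Continuous (fun p : ℝ × ℝ × ℝ => fderiv ℝ F p ((1:ℝ), (0:ℝ), (0:ℝ))) :=
    hfc.clm_apply continuous_const
  have hfxc : Continuous (fun p : ℝ × ℝ × ℝ => fderiv ℝ F p ((0:ℝ), (1:ℝ), (0:ℝ))) :=
    hfc.clm_apply continuous_const
  have hfvc : Continuous (fun p : ℝ × ℝ × ℝ => fderiv ℝ F p ((0:ℝ), (0:ℝ), (1:ℝ))) :=
    hfc.clm_apply continuous_const
  -- vanishing of fderiv F outside the support
  have hfd0 : ∀ p : ℝ × ℝ × ℝ, R < |p.2.2| → fderiv ℝ F p = 0 := by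
    intro p hp
    have hOpen : IsOpen {q : ℝ × ℝ × ℝ | R < |q.2.2|} :=
      isOpen_lt continuous_const (continuous_abs.comp (continuous_snd.comp continuous_snd))
    have h0 : F =ᶠ[nhds p] (fun _ => (0:ℝ)) :=
      Filter.eventuallyEq_of_mem (hOpen.mem_nhds hp)
        (fun q hq => hsupp q.1 q.2.1 q.2.2 hq)
    rw [h0.fderiv_eq]
    exact fderiv_const_apply 0
  -- Vlasov pointwise
  have hVl : ∀ t x v, fderiv ℝ F (t, x, v) (1, 0, 0)
      = -(v * fderiv ℝ F (t, x, v) (0, 1, 0)) - E t x * fderiv ℝ F (t, x, v) (0, 0, 1) := by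
    intro t x v
    have h := hVlasov t x v
    rw [(hft t x v).deriv, (hfx t x v).deriv, (hfv t x v).deriv] at h
    linarith
  -- time derivative of the v-integral of f
  have hρt : ∀ t x, HasDerivAt (fun s => ∫ v : ℝ, f s x v)
      (∫ v : ℝ, fderiv ℝ F (t, x, v) (1, 0, 0)) t := by
    intro t x
    refine hasDerivAt_int_param hR ?_ ?_ (fun s v h => hsupp s x v h)
      (fun s v h => by rw [show fderiv ℝ F (s,x,v) = 0 from hfd0 (s,x,v) h]; rfl)
      (fun s v => hft s x v) t
    · exact hf.continuous.comp (continuous_fst.prodMk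
        (continuous_const.prodMk continuous_snd))
    · exact hftc.comp (continuous_fst.prodMk (continuous_const.prodMk continuous_snd))
  -- x derivative of J at time t₀
  have hJx : ∀ x, HasDerivAt (fun y => J t₀ y)
      (∫ v : ℝ, v * fderiv ℝ F (t₀, x, v) (0, 1, 0)) x := by
    intro x
    have h : HasDerivAt (fun y => ∫ v : ℝ, v * f t₀ y v)
        (∫ v : ℝ, v * fderiv ℝ F (t₀, x, v) (0, 1, 0)) x := by
      refine hasDerivAt_int_param hR ?_ ?_
        (fun y v h => by rw [hsupp t₀ y v h, mul_zero])
        (fun y v h => by rw [show fderiv ℝ F (t₀,y,v) = 0 from hfd0 (t₀,y,v) h]; simp)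
        (fun y v => (hfx t₀ y v).const_mul v) x
      · exact continuous_snd.mul (hf.continuous.comp (continuous_const.prodMk
          (continuous_fst.prodMk continuous_snd)))
      · exact continuous_snd.mul (hfxc.comp (continuous_const.prodMk
          (continuous_fst.prodMk continuous_snd)))
    have he : (fun y => J t₀ y) = fun y => ∫ v : ℝ, v * f t₀ y v := funext fun y => hJ t₀ y
    rw [he]
    exact h
  -- continuity equation : ∫ ∂ₜ f dv = - ∫ v ∂ₓ f dv
  have hcontEq : ∀ x, ∫ v : ℝ, fderiv ℝ F (t₀, x, v) (1, 0, 0)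
      = -∫ v : ℝ, v * fderiv ℝ F (t₀, x, v) (0, 1, 0) := by
    intro x
    have hint1 : Integrable (fun v => v * fderiv ℝ F (t₀, x, v) (0, 1, 0)) :=
      integrable_of_supp (continuous_id.mul (hfxc.comp (continuous_const.prodMk
          (continuous_const.prodMk continuous_id))))
        (fun v h => by rw [show fderiv ℝ F (t₀,x,v) = 0 from hfd0 (t₀,x,v) h]; simp)
    have hint2 : Integrable (fun v => fderiv ℝ F (t₀, x, v) (0, 0, 1)) :=
      integrable_of_supp (hfvc.comp (continuous_const.prodMk
          (continuous_const.prodMk continuous_id)))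
        (fun v h => by rw [show fderiv ℝ F (t₀,x,v) = 0 from hfd0 (t₀,x,v) h]; rfl)
    have hzero : ∫ v : ℝ, fderiv ℝ F (t₀, x, v) (0, 0, 1) = 0 :=
      integral_deriv_of_supp hR (hfvc.comp (continuous_const.prodMk
          (continuous_const.prodMk continuous_id)))
        (fun v => hfv t₀ x v) (fun v h => hsupp t₀ x v h)
        (fun v h => by rw [show fderiv ℝ F (t₀,x,v) = 0 from hfd0 (t₀,x,v) h]; rfl)
    calc ∫ v : ℝ, fderiv ℝ F (t₀, x, v) (1, 0, 0)
        = ∫ v : ℝ, (-(v * fderiv ℝ F (t₀, x, v) (0, 1, 0))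
            - E t₀ x * fderiv ℝ F (t₀, x, v) (0, 0, 1)) := by
          simp_rw [hVl t₀ x]
      _ = (∫ v : ℝ, -(v * fderiv ℝ F (t₀, x, v) (0, 1, 0)))
            - ∫ v : ℝ, E t₀ x * fderiv ℝ F (t₀, x, v) (0, 0, 1) :=
          integral_sub hint1.neg (hint2.const_mul _)
      _ = -∫ v : ℝ, v * fderiv ℝ F (t₀, x, v) (0, 1, 0) := by
          rw [integral_neg, integral_const_mul, hzero, mul_zero, sub_zero]
  -- Poisson : ∂ₓ E = ρ
  have hExρ : ∀ s x, fderiv ℝ EF (s, x) (0, 1) = ρ s x := by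
    intro s x
    rw [← (hEx s x).deriv, hPoisson, hρ]
  -- symmetry of second derivatives of E
  have hsnd : ∀ q : ℝ × ℝ, HasFDerivAt (fderiv ℝ EF) (fderiv ℝ (fderiv ℝ EF) q) q :=
    fun q => (hE1.differentiable one_ne_zero q).hasFDerivAt
  have hsym : ∀ q : ℝ × ℝ, ∀ a b : ℝ × ℝ,
      fderiv ℝ (fderiv ℝ EF) q a b = fderiv ℝ (fderiv ℝ EF) q b a :=
    fun q => second_derivative_symmetric (fun y => (hEdiff y).hasFDerivAt) (hsnd q)
  -- derivatives of the partial derivatives of E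
  have hEtx : ∀ t x, HasDerivAt (fun y => fderiv ℝ EF (t, y) (1, 0))
      (fderiv ℝ (fderiv ℝ EF) (t, x) (0, 1) (1, 0)) x := by
    intro t x
    have hc : HasDerivAt (fun y => fderiv ℝ EF (t, y))
        (fderiv ℝ (fderiv ℝ EF) (t, x) (0, 1)) x :=
      (hsnd (t, x)).comp_hasDerivAt x ((hasDerivAt_const x t).prodMk (hasDerivAt_id x))
    simpa using hc.clm_apply (hasDerivAt_const x ((1:ℝ), (0:ℝ)))
  have hExt : ∀ t x, HasDerivAt (fun s => fderiv ℝ EF (s, x) (0, 1))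
      (fderiv ℝ (fderiv ℝ EF) (t, x) (1, 0) (0, 1)) t := by
    intro t x
    have hc : HasDerivAt (fun s => fderiv ℝ EF (s, x))
        (fderiv ℝ (fderiv ℝ EF) (t, x) (1, 0)) t :=
      (hsnd (t, x)).comp_hasDerivAt t ((hasDerivAt_id t).prodMk (hasDerivAt_const t x))
    simpa using hc.clm_apply (hasDerivAt_const t ((0:ℝ), (1:ℝ)))
  -- identify mixed partial with ∂ₜ ρ
  have hkey : ∀ x, fderiv ℝ (fderiv ℝ EF) (t₀, x) (1, 0) (0, 1)
      = ∫ v : ℝ, fderiv ℝ F (t₀, x, v) (1, 0, 0) := by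
    intro x
    have h1 := hExt t₀ x
    simp only [hExρ] at h1
    have h2 : HasDerivAt (fun s => ρ s x)
        (∫ v : ℝ, fderiv ℝ F (t₀, x, v) (1, 0, 0)) t₀ := by
      have he : (fun s => ρ s x) = fun s => (∫ v : ℝ, f s x v) - 1 :=
        funext fun s => hρ s x
      rw [he]
      exact (hρt t₀ x).sub_const 1
    exact h1.unique h2
  -- the function x ↦ ∂ₜE + J is constant
  have hgconst : ∀ x y : ℝ,
      fderiv ℝ EF (t₀, x) (1, 0) + J t₀ x = fderiv ℝ EF (t₀, y) (1, 0) + J t₀ y := by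
    have hg : ∀ x, HasDerivAt (fun y => fderiv ℝ EF (t₀, y) (1, 0) + J t₀ y) 0 x := by
      intro x
      have h := (hEtx t₀ x).add (hJx x)
      rw [hsym (t₀, x) (0, 1) (1, 0), hkey x, hcontEq x] at h
      rw [neg_add_cancel] at h
      exact h
    intro x y
    exact is_const_of_deriv_eq_zero (fun z => (hg z).differentiableAt)
      (fun z => (hg z).deriv) x y
  -- zero mean of ∂ₜ E
  have hEtmean : ∫ x in Set.Ioc (0:ℝ) L, fderiv ℝ EF (t₀, x) (1, 0) = 0 := by
    have h1 : HasDerivAt (fun s => ∫ x in Set.Ioc (0:ℝ) L, E s x)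
        (∫ x in Set.Ioc (0:ℝ) L, fderiv ℝ EF (t₀, x) (1, 0)) t₀ := by
      refine hasDerivAt_int_param_Ioc hE.continuous
        (((hE1.continuous).clm_apply continuous_const)) (fun s x => hEt s x) t₀
    have h2 : (fun s => ∫ x in Set.Ioc (0:ℝ) L, E s x) = fun _ => (0:ℝ) := by
      funext s
      rw [← intervalIntegral.integral_of_le hL.le, hmean]
    rw [h2] at h1
    exact ((hasDerivAt_const t₀ (0:ℝ)).unique h1).symm
  -- continuity of the integrands in x
  have hJcont : Continuous (fun x => J t₀ x) :=
    continuous_iff_continuousAt.2 fun x => (hJx x).continuousAt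
  have hEtcont : Continuous (fun x => fderiv ℝ EF (t₀, x) (1, 0)) :=
    ((hE1.continuous).clm_apply continuous_const).comp
      (continuous_const.prodMk continuous_id)
  -- value of the constant
  have hval : ∀ x, fderiv ℝ EF (t₀, x) (1, 0) = -J t₀ x + Jbar t₀ := by
    intro x
    have hsum : ∫ y in Set.Ioc (0:ℝ) L, (fderiv ℝ EF (t₀, y) (1, 0) + J t₀ y)
        = L * Jbar t₀ := by
      rw [integral_add (hEtcont.integrableOn_Ioc) (hJcont.integrableOn_Ioc), hEtmean,
        zero_add, hJbar, ← intervalIntegral.integral_of_le hL.le]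
      field_simp
    have hconst : ∫ y in Set.Ioc (0:ℝ) L, (fderiv ℝ EF (t₀, y) (1, 0) + J t₀ y)
        = L * (fderiv ℝ EF (t₀, x) (1, 0) + J t₀ x) := by
      rw [setIntegral_congr_fun measurableSet_Ioc
        (fun y _ => hgconst y x)]
      rw [setIntegral_const]
      simp [Real.volume_Ioc, ENNReal.toReal_ofReal hL.le, hL.le]
    have := hsum.symm.trans hconst
    have hLne : L ≠ 0 := ne_of_gt hL
    have := mul_left_cancel₀ hLne this
    linarith
  -- chain rule along the characteristic
  have hchain : HasDerivAt (fun s => E s (X s))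
      (fderiv ℝ EF (t₀, X t₀) (1, V t₀)) t₀ :=
    (hEdiff (t₀, X t₀)).hasFDerivAt.comp_hasDerivAt (l := EF) t₀
      ((hasDerivAt_id' t₀).prodMk (hX t₀))
  rw [hchain.deriv]
  have hsplit : fderiv ℝ EF (t₀, X t₀) ((1:ℝ), V t₀)
      = fderiv ℝ EF (t₀, X t₀) (1, 0) + V t₀ * fderiv ℝ EF (t₀, X t₀) (0, 1) := by
    have h : ((1:ℝ), V t₀) = ((1:ℝ), (0:ℝ)) + V t₀ • ((0:ℝ), (1:ℝ)) := by
      simp [Prod.ext_iff]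
    rw [h, map_add, ContinuousLinearMap.map_smul]
    simp [smul_eq_mul]
  rw [hsplit, hval (X t₀), hExρ t₀ (X t₀)]
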